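/- Let Q₀(w) = σ²(1 + w'w) + (μ₀ - M'w)' Ω (μ₀ - M'w) on the simplex Δ^{J-1}. Suppose w* ∈ Δ^{J-1} satisfies μ₀ = M'w* (i.e., w* exactly reconstructs the factor loadings). If σ² > 0 and w* ≠ (1/J, ..., 1/J), then w* is not a minimizer of Q₀ over Δ^{J-1}. -/

import Mathlib

/-- if w* ∈ Δ^{J-1} exactly reconstructs the factor loadings
(μ₀ = M'w*), σ² > 0, and w* is not the equal-weights vector, then w* does not
minimize Q₀ over the simplex. -/
theorem reconstructing_weights_not_minimizer
    (J F : ℕ) (hJ : 1 ≤ J) (hF : 1 ≤ F)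
    (σ2 : ℝ) (hσ : 0 < σ2)
    (Ω : Matrix (Fin F) (Fin F) ℝ)
    (hΩ : ∀ x : Fin F → ℝ, 0 ≤ ∑ f, ∑ f', x f * Ω f f' * x f')
    (M : Matrix (Fin J) (Fin F) ℝ) (μ0 : Fin F → ℝ)
    (wstar : Fin J → ℝ) (hw : wstar ∈ stdSimplex ℝ (Fin J))
    (hrec : ∀ f, μ0 f = ∑ j, M j f * wstar j)
    (hne : wstar ≠ fun _ => 1 / (J : ℝ)) :
    let Q : (Fin J → ℝ) → ℝ := fun w =>
      σ2 * (1 + ∑ j, w j ^ 2) +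
        ∑ f, ∑ f', (μ0 f - ∑ j, M j f * w j) * Ω f f' * (μ0 f' - ∑ j, M j f' * w j)
    ¬ (∀ v ∈ stdSimplex ℝ (Fin J), Q wstar ≤ Q v) := by
  intro Q hmin
  have hJ0 : (0:ℝ) < J := by exact_mod_cast Nat.lt_of_lt_of_le Nat.zero_lt_one hJ
  have hJne : (J:ℝ) ≠ 0 := ne_of_gt hJ0
  set S := ∑ j, (wstar j - 1/(J:ℝ))^2 with hSdef
  have hsum1 : ∑ j, wstar j = 1 := hw.2
  set T := ∑ j, wstar j ^2 with hTdef
  have hS : S = T - 1/(J:ℝ) := by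
    have h1 : ∀ j ∈ Finset.univ, (wstar j - 1/(J:ℝ))^2
        = wstar j^2 - (2/(J:ℝ))*wstar j + (1/(J:ℝ))^2 := fun j _ => by ring
    rw [hSdef, Finset.sum_congr rfl h1]
    rw [Finset.sum_add_distrib, Finset.sum_sub_distrib, ← Finset.mul_sum, hsum1,
      Finset.sum_const, Finset.card_fin]
    simp only [nsmul_eq_mul]
    have hJJ : (J:ℝ) * (1/(J:ℝ))^2 = 1/(J:ℝ) := by
      rw [div_pow, one_pow, mul_one_div, sq, ← div_div, div_self hJne]
    rw [hJJ, hTdef]; ring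
  have hS0 : 0 < S := by
    obtain ⟨j0, hj0⟩ : ∃ j, wstar j ≠ 1/(J:ℝ) := by
      by_contra h; push_neg at h; exact hne (funext h)
    refine Finset.sum_pos' (fun j _ => sq_nonneg _) ⟨j0, Finset.mem_univ _, ?_⟩
    have hne0 : wstar j0 - 1/(J:ℝ) ≠ 0 := sub_ne_zero.mpr hj0
    positivity
  set y : Fin F → ℝ := fun f => ∑ j, M j f * (wstar j - 1/(J:ℝ)) with hydef
  set C := ∑ f, ∑ f', y f * Ω f f' * y f' with hCdef
  have hC0 : 0 ≤ C := hΩ y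
  set B := σ2 * S + C with hBdef
  have hB0 : 0 < B := by positivity
  set Δ := σ2 * S / B with hΔdef
  have hΔ0 : 0 < Δ := by positivity
  have hΔB : Δ * B = σ2 * S := div_mul_cancel₀ _ (ne_of_gt hB0)
  have hΔ1 : Δ ≤ 1 := by
    rw [hΔdef, div_le_one hB0]; linarith
  set v : Fin J → ℝ := fun j => wstar j + Δ * (1/(J:ℝ) - wstar j) with hvdef
  have hvmem : v ∈ stdSimplex ℝ (Fin J) := by
    constructor
    · intro j
      have h1 := hw.1 j
      have h2 : v j = (1-Δ) * wstar j + Δ * (1/(J:ℝ)) := by simp only [hvdef]; ring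
      have h3 : (0:ℝ) ≤ 1/(J:ℝ) := by positivity
      rw [h2]
      have : 0 ≤ (1-Δ) * wstar j := mul_nonneg (by linarith) h1
      nlinarith
    · have h0 : ∑ j : Fin J, (1/(J:ℝ) - wstar j) = 0 := by
        rw [Finset.sum_sub_distrib, Finset.sum_const, Finset.card_fin, hsum1]
        simp only [nsmul_eq_mul]
        rw [mul_one_div_cancel hJne, sub_self]
      simp only [hvdef]
      rw [Finset.sum_add_distrib, hsum1, ← Finset.mul_sum, h0, mul_zero, add_zero]
  -- sum of squares of v
  have hvsq : ∑ j, v j ^2 = T + (Δ^2 - 2*Δ) * S := by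
    have h1 : ∀ j ∈ Finset.univ, v j ^2
        = wstar j ^2 + Δ^2 * (wstar j - 1/(J:ℝ))^2
          + (2*Δ) * (wstar j * (1/(J:ℝ)) - wstar j ^2) := fun j _ => by
      simp only [hvdef]; ring
    rw [Finset.sum_congr rfl h1, Finset.sum_add_distrib, Finset.sum_add_distrib,
      ← Finset.mul_sum, ← Finset.mul_sum, ← hSdef, ← hTdef]
    have h2 : ∑ j, (wstar j * (1/(J:ℝ)) - wstar j ^2) = 1/(J:ℝ) - T := by
      rw [Finset.sum_sub_distrib, ← Finset.sum_mul, hsum1, ← hTdef, one_mul]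
    rw [h2, hS]; ring
  -- residual at v
  have hres : ∀ f, μ0 f - ∑ j, M j f * v j = Δ * y f := by
    intro f
    rw [hrec f, ← Finset.sum_sub_distrib]
    have h1 : ∀ j ∈ Finset.univ, M j f * wstar j - M j f * v j
        = Δ * (M j f * (wstar j - 1/(J:ℝ))) := fun j _ => by
      simp only [hvdef]; ring
    rw [Finset.sum_congr rfl h1, ← Finset.mul_sum]
  have hres0 : ∀ f, μ0 f - ∑ j, M j f * wstar j = 0 := fun f => by
    rw [hrec f]; ring
  have hQw : Q wstar = σ2 * (1 + T) := by
    simp only [Q]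
    rw [← hTdef]
    have : ∀ f ∈ Finset.univ, ∑ f', (μ0 f - ∑ j, M j f * wstar j) * Ω f f'
        * (μ0 f' - ∑ j, M j f' * wstar j) = 0 := by
      intro f _
      refine Finset.sum_eq_zero fun f' _ => ?_
      rw [hres0 f]; ring
    rw [Finset.sum_congr rfl this, Finset.sum_const, Finset.card_fin, smul_zero, add_zero]
  have hQv : Q v = σ2 * (1 + T + (Δ^2 - 2*Δ) * S) + Δ^2 * C := by
    simp only [Q]
    rw [hvsq]
    have : ∀ f ∈ Finset.univ, ∑ f', (μ0 f - ∑ j, M j f * v j) * Ω f f'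
        * (μ0 f' - ∑ j, M j f' * v j)
        = Δ^2 * ∑ f', y f * Ω f f' * y f' := by
      intro f _
      rw [Finset.mul_sum]
      refine Finset.sum_congr rfl fun f' _ => ?_
      rw [hres f, hres f']; ring
    rw [Finset.sum_congr rfl this, ← Finset.mul_sum, ← hCdef]
    ring
  have hle := hmin v hvmem
  rw [hQw, hQv] at hle
  nlinarith [mul_pos hΔ0 (mul_pos hσ hS0), sq_nonneg Δ]
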